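/- If an entire function g: ℂ → ℂ satisfies that w ↦ w̄^{k−1} g(w) is a polynomial in w and w̄ of total degree at most k−1 (equivalently, a polyanalytic polynomial of degree ≤ k−1), then g is constant. -/

import Mathlib

open Complex

/-- If g is entire and w̄^{k−1} g(w) is a polyanalytic polynomial of total degree ≤ k−1,
then g is constant. -/
theorem entire_times_conj_pow_polynomial_constant (k : ℕ) (hk : 1 ≤ k)
    (g : ℂ → ℂ) (hg : Differentiable ℂ g)
    (c : ℕ → ℕ → ℂ) (hc : ∀ i j, k - 1 < i + j → c i j = 0)
    (hrep : ∀ w : ℂ, (starRingEnd ℂ w) ^ (k - 1) * g w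
      = ∑ i ∈ Finset.range k, ∑ j ∈ Finset.range k,
          c i j * w ^ i * (starRingEnd ℂ w) ^ j) :
    ∃ a : ℂ, ∀ w, g w = a := by
  set n := k - 1 with hn
  set C : ℝ := ∑ i ∈ Finset.range k, ∑ j ∈ Finset.range k, ‖c i j‖ with hC
  have hbound1 : ∀ w : ℂ, 1 ≤ ‖w‖ → ‖g w‖ ≤ C := by
    intro w hw
    have hwpos : (0:ℝ) < ‖w‖ ^ n := by positivity
    rw [← mul_le_mul_iff_of_pos_right hwpos]
    calc ‖g w‖ * ‖w‖ ^ n = ‖(starRingEnd ℂ w) ^ n * g w‖ := by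
          rw [norm_mul, norm_pow, RCLike.norm_conj]; ring
      _ = ‖∑ i ∈ Finset.range k, ∑ j ∈ Finset.range k,
            c i j * w ^ i * (starRingEnd ℂ w) ^ j‖ := by rw [hrep]
      _ ≤ ∑ i ∈ Finset.range k, ∑ j ∈ Finset.range k,
            ‖c i j * w ^ i * (starRingEnd ℂ w) ^ j‖ := by
          refine (norm_sum_le _ _).trans (Finset.sum_le_sum fun i _ => norm_sum_le _ _)
      _ ≤ ∑ i ∈ Finset.range k, ∑ j ∈ Finset.range k, ‖c i j‖ * ‖w‖ ^ n := by
          refine Finset.sum_le_sum fun i _ => Finset.sum_le_sum fun j _ => ?_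
          by_cases hcz : c i j = 0
          · simp [hcz]
          · have hij : i + j ≤ n := by
              by_contra h
              exact hcz (hc i j (lt_of_not_ge h))
            rw [norm_mul, norm_mul, norm_pow, norm_pow, RCLike.norm_conj, mul_assoc,
              ← pow_add]
            exact mul_le_mul_of_nonneg_left (pow_le_pow_right₀ hw hij) (norm_nonneg _)
      _ = C * ‖w‖ ^ n := by
          rw [hC, Finset.sum_mul]
          exact Finset.sum_congr rfl fun i _ => (Finset.sum_mul _ _ _).symm
  obtain ⟨w₀, hw₀, hmax⟩ := (isCompact_closedBall (0:ℂ) 1).exists_isMaxOn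
    ⟨0, by simp⟩ hg.continuous.norm.continuousOn
  have hbound : ∀ w : ℂ, ‖g w‖ ≤ max C ‖g w₀‖ := by
    intro w
    rcases le_or_gt 1 ‖w‖ with h | h
    · exact le_max_of_le_left (hbound1 w h)
    · refine le_max_of_le_right (hmax ?_)
      simpa [Metric.mem_closedBall, Complex.dist_eq] using h.le
  have hb : Bornology.IsBounded (Set.range g) := by
    rw [isBounded_iff_forall_norm_le]
    exact ⟨max C ‖g w₀‖, by rintro _ ⟨w, rfl⟩; exact hbound w⟩
  exact ⟨g 0, fun w => hg.apply_eq_apply_of_bounded hb w 0⟩
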